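/- With noise-free landmark measurements y_i = R^T(p_i - p), the innovation terms satisfy y := Σ k_i (p_i - p̂ - R̂ y_i) = R̃^T p̃ and σ_R := (1/2)Σ k_i (p_i - p_c)^×(p_i - p̂ - R̂ y_i) = ψ(M R̃), where R̃ = R R̂^T and p̃ = p - R̃p̂ - (I₃ - R̃)p_c. -/

import Mathlib

open Matrix

noncomputable section

def SO3 (R : Matrix (Fin 3) (Fin 3) ℝ) : Prop :=
  Rᵀ * R = 1 ∧ R * Rᵀ = 1 ∧ R.det = 1

def skew (x : Fin 3 → ℝ) : Matrix (Fin 3) (Fin 3) ℝ :=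
  !![0, -x 2, x 1; x 2, 0, -x 0; -x 1, x 0, 0]

def psi (A : Matrix (Fin 3) (Fin 3) ℝ) : Fin 3 → ℝ :=
  (2 : ℝ)⁻¹ • ![A 2 1 - A 1 2, A 0 2 - A 2 0, A 1 0 - A 0 1]

lemma skew_add (a b : Fin 3 → ℝ) : skew (a + b) = skew a + skew b := by
  ext i j
  fin_cases i <;> fin_cases j <;> simp [skew] <;> ring

lemma skew_smul (c : ℝ) (a : Fin 3 → ℝ) : skew (c • a) = c • skew a := by
  ext i j
  fin_cases i <;> fin_cases j <;> simp [skew] <;> ring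

lemma skew_zero : skew (0 : Fin 3 → ℝ) = 0 := by
  simpa using skew_smul 0 0

lemma skew_sum {ι : Type*} (s : Finset ι) (f : ι → Fin 3 → ℝ) :
    skew (∑ i ∈ s, f i) = ∑ i ∈ s, skew (f i) := by
  classical
  induction s using Finset.induction_on with
  | empty => simp [skew_zero]
  | insert _ _ h ih => simp [Finset.sum_insert h, skew_add, ih]

lemma skew_mulVec_self (e : Fin 3 → ℝ) : (skew e).mulVec e = 0 := by
  funext x
  fin_cases x <;>
    simp [skew, mulVec, dotProduct, Fin.sum_univ_three] <;> ring

lemma psi_add (A B : Matrix (Fin 3) (Fin 3) ℝ) : psi (A + B) = psi A + psi B := by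
  funext x
  fin_cases x <;> simp [psi] <;> ring

lemma psi_zero : psi (0 : Matrix (Fin 3) (Fin 3) ℝ) = 0 := by
  funext x
  fin_cases x <;> simp [psi]

lemma psi_smul (c : ℝ) (A : Matrix (Fin 3) (Fin 3) ℝ) : psi (c • A) = c • psi A := by
  funext x
  fin_cases x <;> simp [psi] <;> ring

lemma psi_sum {ι : Type*} (s : Finset ι) (f : ι → Matrix (Fin 3) (Fin 3) ℝ) :
    psi (∑ i ∈ s, f i) = ∑ i ∈ s, psi (f i) := by
  classical
  induction s using Finset.induction_on with
  | empty => simp [psi_zero]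
  | insert _ _ h ih => simp [Finset.sum_insert h, psi_add, ih]

lemma sum_mulVec' {ι : Type*} (s : Finset ι) (f : ι → Matrix (Fin 3) (Fin 3) ℝ)
    (v : Fin 3 → ℝ) : (∑ i ∈ s, f i).mulVec v = ∑ i ∈ s, (f i).mulVec v := by
  classical
  induction s using Finset.induction_on with
  | empty => simp
  | insert _ _ h ih => simp [Finset.sum_insert h, Matrix.add_mulVec, ih]

lemma psi_key (e : Fin 3 → ℝ) (Rt : Matrix (Fin 3) (Fin 3) ℝ) :
    psi (vecMulVec e e * Rt) = -((2 : ℝ)⁻¹ • (skew e).mulVec (Rtᵀ.mulVec e)) := by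
  funext x
  fin_cases x <;>
    simp [psi, skew, mulVec, vecMul, vecMulVec, Matrix.mul_apply, dotProduct,
      Matrix.transpose_apply, Fin.sum_univ_three] <;> ring

/-- With noise-free landmark measurements `yᵢ = Rᵀ(pᵢ - p)`, the innovation
terms satisfy `y = R̃ᵀ p̃` and `σ_R = ψ(M R̃)`. -/
theorem innovation_terms (N : ℕ) (pl : Fin N → Fin 3 → ℝ)
    (k : Fin N → ℝ) (hk : ∀ i, 0 < k i) (hsum : ∑ i, k i = 1)
    (pc : Fin 3 → ℝ) (hpc : pc = ∑ i, k i • pl i)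
    (M : Matrix (Fin 3) (Fin 3) ℝ)
    (hM : M = ∑ i, k i • vecMulVec (pl i - pc) (pl i - pc))
    (R Rh : Matrix (Fin 3) (Fin 3) ℝ) (hR : SO3 R) (hRh : SO3 Rh)
    (p ph : Fin 3 → ℝ)
    (y : Fin N → Fin 3 → ℝ) (hy : ∀ i, y i = Rᵀ.mulVec (pl i - p))
    (Rt : Matrix (Fin 3) (Fin 3) ℝ) (hRt : Rt = R * Rhᵀ)
    (pt : Fin 3 → ℝ) (hpt : pt = p - Rt.mulVec ph - (1 - Rt).mulVec pc) :
    (∑ i, k i • (pl i - ph - Rh.mulVec (y i))) = Rtᵀ.mulVec pt ∧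
    ((2 : ℝ)⁻¹ • ∑ i, k i • (skew (pl i - pc)).mulVec (pl i - ph - Rh.mulVec (y i)))
      = psi (M * Rt) := by
  -- Rt is orthogonal
  have hRtT : Rtᵀ = Rh * Rᵀ := by
    rw [hRt, Matrix.transpose_mul, Matrix.transpose_transpose]
  have hRtO : Rtᵀ * Rt = 1 := by
    rw [hRtT, hRt, Matrix.mul_assoc, ← Matrix.mul_assoc Rᵀ, hR.1, Matrix.one_mul, hRh.2.1]
  -- innovation pointwise
  have hv : ∀ i, pl i - ph - Rh.mulVec (y i)
      = (pl i - pc) - Rtᵀ.mulVec (pl i - pc) + Rtᵀ.mulVec pt := by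
    intro i
    rw [hy i, hpt, Matrix.mulVec_mulVec, ← hRtT]
    simp only [Matrix.mulVec_sub, Matrix.sub_mulVec, Matrix.one_mulVec,
      Matrix.mulVec_mulVec, hRtO, Matrix.one_mulVec]
    abel
  have he : ∑ i, k i • (pl i - pc) = 0 := by
    have : ∑ i, k i • pc = pc := by rw [← Finset.sum_smul, hsum, one_smul]
    simp only [smul_sub, Finset.sum_sub_distrib, ← hpc, this, sub_self]
  have hsum_e : ∀ (A : Matrix (Fin 3) (Fin 3) ℝ),
      ∑ i, k i • A.mulVec (pl i - pc) = 0 := by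
    intro A
    have : ∑ i, k i • A.mulVec (pl i - pc) = A.mulVec (∑ i, k i • (pl i - pc)) := by
      rw [← Matrix.mulVecLin_apply, map_sum]
      simp [Matrix.mulVecLin_apply, Matrix.mulVec_smul]
    rw [this, he, Matrix.mulVec_zero]
  constructor
  · calc ∑ i, k i • (pl i - ph - Rh.mulVec (y i))
        = ∑ i, (k i • (pl i - pc) - k i • Rtᵀ.mulVec (pl i - pc)
            + k i • Rtᵀ.mulVec pt) := by
          simp only [hv, smul_sub, smul_add]
      _ = ∑ i, k i • (pl i - pc) - ∑ i, k i • Rtᵀ.mulVec (pl i - pc)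
            + ∑ i, k i • Rtᵀ.mulVec pt := by
          rw [Finset.sum_add_distrib, Finset.sum_sub_distrib]
      _ = Rtᵀ.mulVec pt := by
          rw [he, hsum_e, ← Finset.sum_smul, hsum]
          simp
  · have step : ∑ i, k i • (skew (pl i - pc)).mulVec (pl i - ph - Rh.mulVec (y i))
        = -∑ i, k i • (skew (pl i - pc)).mulVec (Rtᵀ.mulVec (pl i - pc)) := by
      have h1 : ∀ i, (skew (pl i - pc)).mulVec (pl i - ph - Rh.mulVec (y i))
          = -(skew (pl i - pc)).mulVec (Rtᵀ.mulVec (pl i - pc))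
            + (skew (pl i - pc)).mulVec (Rtᵀ.mulVec pt) := by
        intro i
        rw [hv i]
        generalize pl i - pc = e
        rw [Matrix.mulVec_add, Matrix.mulVec_sub, skew_mulVec_self, zero_sub]
      simp only [h1, smul_add]
      rw [Finset.sum_add_distrib]
      have h2 : ∑ i, k i • (skew (pl i - pc)).mulVec (Rtᵀ.mulVec pt) = 0 := by
        have hz : ∑ i, k i • skew (pl i - pc) = 0 := by
          have : ∑ i, k i • skew (pl i - pc) = skew (∑ i, k i • (pl i - pc)) := by
            rw [skew_sum]
            simp [skew_smul]
          rw [this, he, skew_zero]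
        have : ∑ i, k i • (skew (pl i - pc)).mulVec (Rtᵀ.mulVec pt)
            = (∑ i, k i • skew (pl i - pc)).mulVec (Rtᵀ.mulVec pt) := by
          rw [sum_mulVec']
          simp [Matrix.smul_mulVec]
        rw [this, hz, Matrix.zero_mulVec]
      rw [h2, add_zero]
      simp [smul_neg]
    rw [step, hM, Finset.sum_mul]
    simp only [smul_mul_assoc]
    rw [psi_sum]
    simp only [psi_key, psi_smul]
    simp only [smul_neg, Finset.sum_neg_distrib, neg_inj, Finset.smul_sum]
    exact Finset.sum_congr rfl fun i _ => smul_comm _ _ _
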